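/- Let α > 1, 0 < ε ≤ 1, and let h : (0,1] → ℝ be positive, monotone increasing, with h(x) ≤ x^α for all x ∈ (0,1]. Then for every s > 0: ∫_0^ε ∫_0^x exp(−2s ∫_y^x dt/h(t)) dy dx ≤ ε^{α+1}/(2s(α+1)). In particular the integral kernel (x,y) ↦ exp(−s ∫_y^x dt/h(t)) · 1_{y<x} is square integrable on (0,ε)×(0,ε), i.e. the operator P_{0,s}^{1/h} is Hilbert–Schmidt on L²(0,ε). -/

import Mathlib

open MeasureTheory Set Real

/-- The kernel of `P_{0,s}^{1/h}` is square integrable on `(0,ε)²`, i.e. the operator is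
Hilbert–Schmidt, with the quantitative bound `∫_0^ε ∫_0^x exp(−2s∫_y^x dt/h(t)) dy dx ≤
ε^{α+1}/(2s(α+1))`. -/
theorem stmt_10 (α ε : ℝ) (hα : 1 < α) (hε : 0 < ε) (hε1 : ε ≤ 1)
    (h : ℝ → ℝ)
    (hpos : ∀ x ∈ Ioc (0:ℝ) 1, 0 < h x)
    (hmono : ∀ x ∈ Ioc (0:ℝ) 1, ∀ y ∈ Ioc (0:ℝ) 1, x ≤ y → h x ≤ h y)
    (hbound : ∀ x ∈ Ioc (0:ℝ) 1, h x ≤ x ^ α)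
    (s : ℝ) (hs : 0 < s) :
    (∫ x in Ioo 0 ε, ∫ y in Ioo 0 x,
        Real.exp (-(2 * s * ∫ t in y..x, 1 / h t)) ≤ ε ^ (α + 1) / (2 * s * (α + 1))) ∧
    MemLp (fun p : ℝ × ℝ =>
        if p.2 < p.1 then Real.exp (-(s * ∫ t in p.2..p.1, 1 / h t)) else 0)
      2 (volume.restrict (Ioo (0:ℝ) ε ×ˢ Ioo (0:ℝ) ε)) := by
  have hα0 : (0:ℝ) < α := lt_trans one_pos hα
  have hanti : AntitoneOn (fun t => 1 / h t) (Ioc (0:ℝ) 1) := by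
    intro a ha b hb hab
    exact one_div_le_one_div_of_le (hpos a ha) (hmono a ha b hb hab)
  -- interval integrability of 1/h on subintervals of (0,1]
  have hint : ∀ a b : ℝ, 0 < a → 0 < b → a ≤ 1 → b ≤ 1 →
      IntervalIntegrable (fun t => 1 / h t) volume a b := by
    intro a b ha hb ha1 hb1
    refine (hanti.mono ?_).intervalIntegrable
    intro t ht
    exact ⟨lt_of_lt_of_le (lt_min ha hb) ht.1, le_trans ht.2 (max_le ha1 hb1)⟩
  -- key pointwise lower bound for the interval integral
  have key : ∀ x ∈ Ioo (0:ℝ) ε, ∀ y ∈ Ioo (0:ℝ) x,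
      x ^ (-α) * (x - y) ≤ ∫ t in y..x, 1 / h t := by
    intro x hx y hy
    have hx1 : x ∈ Ioc (0:ℝ) 1 := ⟨hx.1, hx.2.le.trans hε1⟩
    have hy0 : 0 < y := hy.1
    have hyx : y ≤ x := hy.2.le
    have hint' : IntervalIntegrable (fun t => 1 / h t) volume y x :=
      hint y x hy0 hx1.1 (hyx.trans hx1.2) hx1.2
    have hconst : IntervalIntegrable (fun _ : ℝ => x ^ (-α)) volume y x :=
      intervalIntegrable_const
    have hmono' : ∀ t ∈ Icc y x, x ^ (-α) ≤ 1 / h t := by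
      intro t ht
      have ht1 : t ∈ Ioc (0:ℝ) 1 := ⟨lt_of_lt_of_le hy0 ht.1, ht.2.trans hx1.2⟩
      have h1 : h t ≤ x ^ α := (hmono t ht1 x hx1 ht.2).trans (hbound x hx1)
      rw [Real.rpow_neg hx1.1.le, ← one_div]
      exact one_div_le_one_div_of_le (hpos t ht1) h1
    have hB := intervalIntegral.integral_mono_on hyx hconst hint' hmono'
    rw [intervalIntegral.integral_const, smul_eq_mul] at hB
    linarith [hB]
  -- inner integral bound
  have inner : ∀ x ∈ Ioo (0:ℝ) ε,
      (∫ y in Ioo (0:ℝ) x, Real.exp (-(2 * s * ∫ t in y..x, 1 / h t)))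
        ≤ x ^ α / (2 * s) := by
    intro x hx
    have hx0 : 0 < x := hx.1
    set c : ℝ := 2 * s * x ^ (-α) with hc
    have hxa : (0:ℝ) < x ^ (-α) := Real.rpow_pos_of_pos hx0 _
    have hc0 : 0 < c := by positivity
    have hgc : Continuous fun y : ℝ => Real.exp (-(c * (x - y))) := by continuity
    have hg : IntegrableOn (fun y => Real.exp (-(c * (x - y)))) (Ioo 0 x) volume := by
      have := (hgc.intervalIntegrable (μ := volume) 0 x)
      rw [intervalIntegrable_iff_integrableOn_Ioo_of_le hx0.le] at this
      exact this
    have hle : ∀ y ∈ Ioo (0:ℝ) x,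
        Real.exp (-(2 * s * ∫ t in y..x, 1 / h t)) ≤ Real.exp (-(c * (x - y))) := by
      intro y hy
      apply Real.exp_le_exp.2
      have hk := key x hx y hy
      have h2 : 2 * s * (x ^ (-α) * (x - y)) ≤ 2 * s * ∫ t in y..x, 1 / h t :=
        mul_le_mul_of_nonneg_left hk (by positivity)
      simp only [hc]
      nlinarith [h2]
    have step1 : (∫ y in Ioo (0:ℝ) x, Real.exp (-(2 * s * ∫ t in y..x, 1 / h t)))
        ≤ ∫ y in Ioo (0:ℝ) x, Real.exp (-(c * (x - y))) :=
      integral_mono_of_nonneg (Filter.Eventually.of_forall fun y => (Real.exp_pos _).le) hg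
        ((ae_restrict_iff' measurableSet_Ioo).2 (Filter.Eventually.of_forall hle))
    have hIoo : (∫ y in Ioo (0:ℝ) x, Real.exp (-(c * (x - y))))
        = ∫ y in (0:ℝ)..x, Real.exp (-(c * (x - y))) := by
      rw [intervalIntegral.integral_of_le hx0.le, integral_Ioc_eq_integral_Ioo]
    have hrw : (fun y : ℝ => Real.exp (-(c * (x - y))))
        = fun y : ℝ => Real.exp (c * y) * Real.exp (-(c * x)) := by
      funext y
      rw [← Real.exp_add]
      ring_nf
    have hcomp : (∫ y in (0:ℝ)..x, Real.exp (c * y))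
        = c⁻¹ * (Real.exp (c * x) - 1) := by
      have := intervalIntegral.integral_comp_mul_left (fun u => Real.exp u) hc0.ne'
        (a := 0) (b := x)
      rw [this, integral_exp, mul_zero, Real.exp_zero, smul_eq_mul]
    have hval : (∫ y in (0:ℝ)..x, Real.exp (-(c * (x - y))))
        = c⁻¹ * (1 - Real.exp (-(c * x))) := by
      rw [hrw, intervalIntegral.integral_mul_const, hcomp]
      rw [Real.exp_neg]
      have hex : Real.exp (c * x) ≠ 0 := (Real.exp_pos _).ne'
      field_simp
    have hcand : c⁻¹ = x ^ α / (2 * s) := by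
      rw [hc, Real.rpow_neg hx0.le]
      have hxap : (0:ℝ) < x ^ α := Real.rpow_pos_of_pos hx0 _
      field_simp
    calc (∫ y in Ioo (0:ℝ) x, Real.exp (-(2 * s * ∫ t in y..x, 1 / h t)))
        ≤ ∫ y in Ioo (0:ℝ) x, Real.exp (-(c * (x - y))) := step1
      _ = c⁻¹ * (1 - Real.exp (-(c * x))) := by rw [hIoo, hval]
      _ ≤ c⁻¹ * 1 := by
          apply mul_le_mul_of_nonneg_left _ (inv_nonneg.2 hc0.le)
          linarith [(Real.exp_pos (-(c * x))).le]
      _ = x ^ α / (2 * s) := by rw [mul_one, hcand]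
  -- Part 1
  have hg2 : IntegrableOn (fun x : ℝ => x ^ α / (2 * s)) (Ioo 0 ε) volume := by
    have h1 : IntervalIntegrable (fun x : ℝ => x ^ α) volume 0 ε :=
      intervalIntegral.intervalIntegrable_rpow' (by linarith)
    have h2 := h1.div_const (2 * s)
    rwa [intervalIntegrable_iff_integrableOn_Ioo_of_le hε.le] at h2
  have part1 : (∫ x in Ioo (0:ℝ) ε, ∫ y in Ioo (0:ℝ) x,
      Real.exp (-(2 * s * ∫ t in y..x, 1 / h t))) ≤ ε ^ (α + 1) / (2 * s * (α + 1)) := by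
    have h1 : (∫ x in Ioo (0:ℝ) ε, ∫ y in Ioo (0:ℝ) x,
        Real.exp (-(2 * s * ∫ t in y..x, 1 / h t)))
          ≤ ∫ x in Ioo (0:ℝ) ε, x ^ α / (2 * s) :=
      integral_mono_of_nonneg
        (Filter.Eventually.of_forall fun x =>
          integral_nonneg fun y => (Real.exp_pos _).le)
        hg2 ((ae_restrict_iff' measurableSet_Ioo).2 (Filter.Eventually.of_forall inner))
    refine h1.trans ?_
    have h2 : (∫ x in Ioo (0:ℝ) ε, x ^ α / (2 * s))
        = (∫ x in (0:ℝ)..ε, x ^ α) / (2 * s) := by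
      rw [intervalIntegral.integral_of_le hε.le, integral_Ioc_eq_integral_Ioo,
        integral_div]
    rw [h2, integral_rpow (Or.inl (by linarith)), Real.zero_rpow (by linarith)]
    have hα1 : (0:ℝ) < α + 1 := by linarith
    rw [sub_zero]
    rw [div_div]
    rw [mul_comm (α + 1) (2 * s)]
  -- Part 2 : measurability of the kernel
  have hsplit : ∀ x ∈ Ioo (0:ℝ) ε, ∀ y ∈ Ioo (0:ℝ) ε,
      (∫ t in y..x, 1 / h t)
        = (∫ t in (ε/2)..x, 1 / h t) - ∫ t in (ε/2)..y, 1 / h t := by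
    intro x hx y hy
    have h1 : IntervalIntegrable (fun t => 1 / h t) volume y (ε/2) :=
      hint _ _ hy.1 (by linarith) (by linarith [hy.2]) (by linarith)
    have h2 : IntervalIntegrable (fun t => 1 / h t) volume (ε/2) x :=
      hint _ _ (by linarith) hx.1 (by linarith) (by linarith [hx.2])
    have hadd := intervalIntegral.integral_add_adjacent_intervals h1 h2
    have hsym : (∫ t in y..(ε/2), 1 / h t) = -∫ t in (ε/2)..y, 1 / h t :=
      intervalIntegral.integral_symm _ _
    linarith [hadd, hsym]
  set H : ℝ → ℝ := fun x => ∫ t in (ε/2)..x, 1 / h t with hHdef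
  have hcont : ContinuousOn H (Ioo 0 ε) := by
    intro x₀ hx₀
    apply ContinuousAt.continuousWithinAt
    have ha2 : (0:ℝ) < x₀ / 2 := by linarith [hx₀.1]
    have hax : x₀ / 2 < x₀ := by linarith [hx₀.1]
    have hintP : IntervalIntegrable (fun t => 1 / h t) volume (x₀/2) ε :=
      hint _ _ ha2 hε (by linarith [hx₀.2]) hε1
    have hP : ContinuousOn (fun b => ∫ t in (x₀/2)..b, 1 / h t) (uIcc (x₀/2) ε) :=
      intervalIntegral.continuousOn_primitive_interval' hintP left_mem_uIcc
    have huicc : uIcc (x₀/2) ε = Icc (x₀/2) ε := uIcc_of_le (by linarith [hx₀.2])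
    have hPat : ContinuousAt (fun b => ∫ t in (x₀/2)..b, 1 / h t) x₀ := by
      rw [huicc] at hP
      exact hP.continuousAt (Icc_mem_nhds hax hx₀.2)
    have hEq : ∀ x ∈ Ioo (0:ℝ) ε,
        H x = H (x₀/2) + ∫ t in (x₀/2)..x, 1 / h t := by
      intro x hx
      have h1 : IntervalIntegrable (fun t => 1 / h t) volume (ε/2) (x₀/2) :=
        hint _ _ (by linarith) ha2 (by linarith) (by linarith [hx₀.2])
      have h2 : IntervalIntegrable (fun t => 1 / h t) volume (x₀/2) x :=
        hint _ _ ha2 hx.1 (by linarith [hx₀.2]) (by linarith [hx.2])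
      have := intervalIntegral.integral_add_adjacent_intervals h1 h2
      simp only [hHdef]
      linarith [this]
    have hfeq : H =ᶠ[nhds x₀] fun x => H (x₀/2) + ∫ t in (x₀/2)..x, 1 / h t := by
      filter_upwards [Ioo_mem_nhds hx₀.1 hx₀.2] with x hx
      exact hEq x hx
    exact ContinuousAt.congr (continuousAt_const.add hPat) hfeq.symm
  have hmeasH : AEMeasurable H (volume.restrict (Ioo 0 ε)) :=
    hcont.aemeasurable measurableSet_Ioo
  have hSmeas : MeasurableSet (Ioo (0:ℝ) ε ×ˢ Ioo (0:ℝ) ε) :=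
    measurableSet_Ioo.prod measurableSet_Ioo
  have hFmeas : AEMeasurable
      ({q : ℝ × ℝ | q.2 < q.1}.indicator fun p => Real.exp (-(s * (H p.1 - H p.2))))
      (volume.restrict (Ioo (0:ℝ) ε ×ˢ Ioo (0:ℝ) ε)) := by
    have hprod : (volume : Measure (ℝ × ℝ)).restrict (Ioo (0:ℝ) ε ×ˢ Ioo (0:ℝ) ε)
        = (volume.restrict (Ioo (0:ℝ) ε)).prod (volume.restrict (Ioo (0:ℝ) ε)) := by
      rw [Measure.volume_eq_prod, Measure.prod_restrict]
    rw [hprod]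
    have h1 : AEMeasurable (fun p : ℝ × ℝ => Real.exp (-(s * (H p.1 - H p.2))))
        ((volume.restrict (Ioo (0:ℝ) ε)).prod (volume.restrict (Ioo (0:ℝ) ε))) :=
      Real.measurable_exp.comp_aemeasurable
        (((hmeasH.comp_fst.sub hmeasH.comp_snd).const_mul s).neg)
    exact h1.indicator (measurableSet_lt measurable_snd measurable_fst)
  have hKmeas : AEStronglyMeasurable
      (fun p : ℝ × ℝ =>
        if p.2 < p.1 then Real.exp (-(s * ∫ t in p.2..p.1, 1 / h t)) else 0)
      (volume.restrict (Ioo (0:ℝ) ε ×ˢ Ioo (0:ℝ) ε)) := by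
    refine (hFmeas.aestronglyMeasurable).congr ?_
    refine (ae_restrict_iff' hSmeas).2 (Filter.Eventually.of_forall ?_)
    rintro ⟨x, y⟩ ⟨hx, hy⟩
    by_cases hlt : y < x
    · simp only [Set.indicator_apply, Set.mem_setOf_eq, hlt, if_true]
      rw [hsplit x hx y hy]
    · simp only [Set.indicator_apply, Set.mem_setOf_eq, hlt, if_false]
  haveI : IsFiniteMeasure (volume.restrict (Ioo (0:ℝ) ε ×ˢ Ioo (0:ℝ) ε)) := by
    constructor
    rw [Measure.restrict_apply_univ, Measure.volume_eq_prod, Measure.prod_prod]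
    exact ENNReal.mul_lt_top (by simp [Real.volume_Ioo]) (by simp [Real.volume_Ioo])
  refine ⟨part1, MemLp.of_bound hKmeas 1 ?_⟩
  refine (ae_restrict_iff' hSmeas).2 (Filter.Eventually.of_forall ?_)
  rintro ⟨x, y⟩ ⟨hx, hy⟩
  dsimp only
  split_ifs with hlt
  · rw [Real.norm_eq_abs, Real.abs_exp, Real.exp_le_one_iff]
    have h0 : 0 ≤ ∫ t in y..x, 1 / h t := by
      apply intervalIntegral.integral_nonneg hlt.le
      intro u hu
      have hu1 : u ∈ Ioc (0:ℝ) 1 := ⟨lt_of_lt_of_le hy.1 hu.1, hu.2.trans (hx.2.le.trans hε1)⟩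
      exact (one_div_nonneg).2 (hpos u hu1).le
    nlinarith [mul_nonneg hs.le h0]
  · simp
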